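/- Let A be a commutative algebra, D ⊆ Der(A) a distribution (a Lie subalgebra which is also an A-submodule) and I a regular complete integral for D, meaning D ∩ Der_I(A)_0 = I·D. Then the Bott connection ∇_X(v) = [X̃, v], where X̃ ∈ D is any lift of X ∈ D/(I·D) and v ∈ V(I), is well-defined: if X̃₁, X̃₂ ∈ D satisfy ρ(X̃₁) = ρ(X̃₂) then [X̃₁, v] = [X̃₂, v] in V(I) for all v ∈ V(I). -/

import Mathlib

/-- `Γ(I)`: `K`-linear maps `A → A/I` that are derivations over the quotient map. -/
def IsGammaMap' {K A : Type*} [Field K] [CommRing A] [Algebra K A] (I : Ideal A)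
    (s : A →ₗ[K] A ⧸ I) : Prop :=
  ∀ a b : A, s (a * b) = s a * Ideal.Quotient.mk I b + Ideal.Quotient.mk I a * s b

/-- Let `D ⊆ Der(A)` be a distribution (a Lie subalgebra which is also an
`A`-submodule) and `I` a regular complete integral for `D`, i.e. `I` is an integral
(`D ⊆ Der_I(A)`) and `D ∩ Der_I(A)₀ = I·D`.  Then the Bott connection `∇_X(v) = [X̃, v]`
is well defined: if `X̃₁, X̃₂ ∈ D` satisfy `ρ(X̃₁) = ρ(X̃₂)` then `[X̃₁, v] = [X̃₂, v]` in
`V(I) = Γ(I)/Γ(I)₀` for every `v ∈ V(I)` (two elements of `Γ(I)` have the same class in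
`V(I)` iff they agree on `I`). -/
theorem stmt2 (K : Type*) [Field K] (A : Type*) [CommRing A] [Algebra K A] (I : Ideal A)
    (D : Set (Derivation K A A))
    -- `D` is a Lie subalgebra and an `A`-submodule of `Der(A)`
    (hbr : ∀ X ∈ D, ∀ Y ∈ D, ⁅X, Y⁆ ∈ D)
    (hadd : ∀ X ∈ D, ∀ Y ∈ D, X + Y ∈ D)
    (hsmul : ∀ a : A, ∀ X ∈ D, a • X ∈ D)
    -- `I` is an integral for `D`
    (hint : ∀ X ∈ D, ∀ a ∈ I, X a ∈ I)
    -- regularity: `D₀ = D ∩ Der_I(A)₀ ⊆ I·D`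
    (hreg : ∀ X ∈ D, (∀ a : A, X a ∈ I) →
      X ∈ AddSubmonoid.closure {Y : Derivation K A A | ∃ k ∈ I, ∃ U ∈ D, Y = k • U}) :
    ∀ X₁ ∈ D, ∀ X₂ ∈ D,
      -- `ρ(X̃₁) = ρ(X̃₂)`
      (∀ a : A, X₁ a - X₂ a ∈ I) →
      ∀ s : A →ₗ[K] A ⧸ I, IsGammaMap' I s →
      ∀ ρ₁ ρ₂ : (A ⧸ I) →ₗ[K] A ⧸ I,
        (∀ a : A, ρ₁ (Ideal.Quotient.mk I a) = Ideal.Quotient.mk I (X₁ a)) →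
        (∀ a : A, ρ₂ (Ideal.Quotient.mk I a) = Ideal.Quotient.mk I (X₂ a)) →
      ∀ x ∈ I, (ρ₁ (s x) - s (X₁ x)) - (ρ₂ (s x) - s (X₂ x)) = 0 := by
  intro X₁ hX₁ X₂ hX₂ hρ s hs ρ₁ ρ₂ h₁ h₂ x hx
  -- Z = X₁ - X₂ lies in D and maps A into I
  have hnegX₂ : (-1 : A) • X₂ ∈ D := hsmul (-1) X₂ hX₂
  have hZD : X₁ - X₂ ∈ D := by
    have : X₁ + (-1 : A) • X₂ = X₁ - X₂ := by
      ext a; simp [sub_eq_add_neg]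
    rw [← this]; exact hadd X₁ hX₁ _ hnegX₂
  have hZI : ∀ a : A, (X₁ - X₂) a ∈ I := by
    intro a; simpa using hρ a
  have hZ := hreg (X₁ - X₂) hZD hZI
  -- key: for every Y in the closure, mk (Y a) = 0 and s (Y x) = 0
  have key : ∀ Y ∈ AddSubmonoid.closure
      {Y : Derivation K A A | ∃ k ∈ I, ∃ U ∈ D, Y = k • U},
      (∀ a : A, Ideal.Quotient.mk I (Y a) = 0) ∧ (∀ y ∈ I, s (Y y) = 0) := by
    intro Y hY
    induction hY using AddSubmonoid.closure_induction with
    | mem Y hY =>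
      obtain ⟨k, hk, U, hU, rfl⟩ := hY
      constructor
      · intro a
        have : Ideal.Quotient.mk I k = 0 := (Ideal.Quotient.eq_zero_iff_mem).2 hk
        simp [Derivation.smul_apply, this]
      · intro y hy
        have hUy : Ideal.Quotient.mk I (U y) = 0 :=
          (Ideal.Quotient.eq_zero_iff_mem).2 (hint U hU y hy)
        have hk0 : Ideal.Quotient.mk I k = 0 := (Ideal.Quotient.eq_zero_iff_mem).2 hk
        have := hs k (U y)
        simp only [Derivation.smul_apply, smul_eq_mul]
        rw [this, hUy, hk0]
        ring
    | zero =>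
      constructor
      · intro a; simp
      · intro y hy; simp
    | add Y₁ Y₂ _ _ ih₁ ih₂ =>
      constructor
      · intro a
        have : (Y₁ + Y₂) a = Y₁ a + Y₂ a := rfl
        rw [this, map_add, ih₁.1 a, ih₂.1 a, add_zero]
      · intro y hy
        have : (Y₁ + Y₂) y = Y₁ y + Y₂ y := rfl
        rw [this, map_add, ih₁.2 y hy, ih₂.2 y hy, add_zero]
  obtain ⟨hmk0, hs0⟩ := key _ hZ
  obtain ⟨a, ha⟩ := Ideal.Quotient.mk_surjective (s x)
  have e1 : ρ₁ (s x) = Ideal.Quotient.mk I (X₁ a) := by rw [← ha, h₁]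
  have e2 : ρ₂ (s x) = Ideal.Quotient.mk I (X₂ a) := by rw [← ha, h₂]
  have hZa : Ideal.Quotient.mk I (X₁ a) - Ideal.Quotient.mk I (X₂ a) = 0 := by
    have := hmk0 a
    simpa [Derivation.sub_apply, map_sub] using this
  have hZx : s (X₁ x) - s (X₂ x) = 0 := by
    have := hs0 x hx
    simpa [Derivation.sub_apply, map_sub] using this
  rw [e1, e2]
  linear_combination hZa - hZx
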